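/- Let q be a prime power, let K be a finite field with q elements, let L be a field extension of K of degree n, let θ : Lˣ → ℂˣ be an injective group homomorphism, and let e be an integer. Then Σ_{α} θ(α)^e = Σ_{s | n} μ̂(n/s) · (q^s − 1) · δ[(q^s − 1) divides e], where the left-hand sum is over all α ∈ Lˣ with [K(α) : K] = n (i.e., α generating L over K), μ̂ is the Möbius function, and δ[P] is 1 if P holds and 0 otherwise. -/

import Mathlib

open Finset

lemma aux_pow_eq_one_nat {q r : ℕ} (hq : 2 ≤ q) (h : q ^ r = 1) : r = 0 := by
  by_contra hr
  have := Nat.one_lt_pow hr (show 1 < q by omega)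
  omega

/-- If `q ≥ 2` and `q^d - 1 ∣ q^s - 1` then `d ∣ s`. -/
lemma aux_dvd_of_pow_sub_one_dvd {q d s : ℕ} (hq : 2 ≤ q) (h : q ^ d - 1 ∣ q ^ s - 1) :
    d ∣ s := by
  rcases Nat.eq_zero_or_pos d with rfl | hd
  · simp only [pow_zero, Nat.sub_self, Nat.zero_dvd] at h
    have h1 : 1 ≤ q ^ s := Nat.one_le_pow _ _ (by omega)
    have h2 : q ^ s = 1 := by omega
    rw [aux_pow_eq_one_nat hq h2]
  · have hs : s = d * (s / d) + s % d := (Nat.div_add_mod s d).symm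
    have h1 : (1:ℕ) ≤ q ^ (s % d) := Nat.one_le_pow _ _ (by omega)
    have h2 : (1:ℕ) ≤ q ^ (d * (s / d)) := Nat.one_le_pow _ _ (by omega)
    have hdec : q ^ s - 1 = q ^ (s % d) * (q ^ (d * (s / d)) - 1) + (q ^ (s % d) - 1) := by
      have h3 : q ^ s = q ^ (s % d) * q ^ (d * (s / d)) := by rw [← pow_add, add_comm, ← hs]
      have h4 : q ^ (s % d) * 1 ≤ q ^ (s % d) * q ^ (d * (s / d)) :=
        Nat.mul_le_mul_left _ h2
      rw [h3, Nat.mul_sub, Nat.mul_one]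
      omega
    have hdvd1 : q ^ d - 1 ∣ q ^ (d * (s / d)) - 1 :=
      Nat.pow_sub_one_dvd_pow_sub_one q (dvd_mul_right d (s / d))
    have hdvd2 : q ^ d - 1 ∣ q ^ (s % d) - 1 := by
      have h4 := Nat.dvd_sub h (hdvd1.mul_left (q ^ (s % d)))
      rw [hdec, Nat.add_sub_cancel_left] at h4
      exact h4
    have hrd : s % d < d := Nat.mod_lt _ hd
    have hlt : q ^ (s % d) - 1 < q ^ d - 1 := by
      have := Nat.pow_lt_pow_right (show 1 < q by omega) hrd
      omega
    have hr0 : q ^ (s % d) - 1 = 0 := Nat.eq_zero_of_dvd_of_lt hdvd2 hlt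
    exact Nat.dvd_of_mod_eq_zero (aux_pow_eq_one_nat hq (by omega))

/-- A nontrivial character of a finite commutative group sums to zero. -/
lemma aux_sum_char_eq_zero {G : Type*} [CommGroup G] [Fintype G] (χ : G →* ℂˣ) {a : G}
    (ha : (χ a : ℂ) ≠ 1) : ∑ g : G, (χ g : ℂ) = 0 := by
  have h : (χ a : ℂ) * ∑ g : G, (χ g : ℂ) = ∑ g : G, (χ g : ℂ) := by
    rw [Finset.mul_sum]
    exact Fintype.sum_bijective (a * ·) (Group.mulLeft_bijective a)
      (fun g => (χ a : ℂ) * (χ g : ℂ)) (fun g => (χ g : ℂ))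
      (fun g => by simp [map_mul])
  have h2 : ((χ a : ℂ) - 1) * ∑ g : G, (χ g : ℂ) = 0 := by
    rw [sub_mul, one_mul, h, sub_self]
  exact (mul_eq_zero.mp h2).resolve_left (sub_ne_zero.mpr ha)

/-- Sum of the Möbius function over divisors. -/
lemma aux_sum_moebius (m : ℕ) (hm : 0 < m) :
    ∑ u ∈ m.divisors, ((ArithmeticFunction.moebius u : ℤ) : ℂ) = if m = 1 then 1 else 0 := by
  have h := congrArg (fun f : ArithmeticFunction ℤ => f m)
    ArithmeticFunction.moebius_mul_coe_zeta
  simp only [ArithmeticFunction.coe_mul_zeta_apply, ArithmeticFunction.one_apply] at h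
  rw [← Int.cast_sum, h]
  split <;> simp

/-- Möbius inversion of the divisibility indicator. -/
lemma aux_moebius_indicator (n d : ℕ) (hn : 0 < n) (hd : d ∣ n) :
    ∑ s ∈ n.divisors, ((ArithmeticFunction.moebius (n / s) : ℤ) : ℂ) *
        (if d ∣ s then 1 else 0) = if d = n then 1 else 0 := by
  classical
  have hd0 : d ≠ 0 := by rintro rfl; rw [Nat.zero_dvd] at hd; omega
  have hnd0 : 0 < n / d := Nat.div_pos (Nat.le_of_dvd hn hd) (by omega)
  have step1 : ∑ s ∈ n.divisors, ((ArithmeticFunction.moebius (n / s) : ℤ) : ℂ) *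
      (if d ∣ s then 1 else 0)
      = ∑ s ∈ n.divisors.filter (fun s => d ∣ s),
          ((ArithmeticFunction.moebius (n / s) : ℤ) : ℂ) := by
    rw [Finset.sum_filter]
    exact Finset.sum_congr rfl fun s _ => by rw [mul_ite, mul_one, mul_zero]
  rw [step1]
  have step2 : ∑ s ∈ n.divisors.filter (fun s => d ∣ s),
      ((ArithmeticFunction.moebius (n / s) : ℤ) : ℂ)
      = ∑ t ∈ (n / d).divisors, ((ArithmeticFunction.moebius ((n / d) / t) : ℤ) : ℂ) := by
    refine Finset.sum_bij' (fun s _ => s / d) (fun t _ => d * t) ?_ ?_ ?_ ?_ ?_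
    · intro s hs
      rw [Finset.mem_filter, Nat.mem_divisors] at hs
      obtain ⟨⟨hsn, hn0⟩, hds⟩ := hs
      rw [Nat.mem_divisors]
      refine ⟨?_, hnd0.ne'⟩
      obtain ⟨c, rfl⟩ := hds
      show d * c / d ∣ n / d
      rw [Nat.mul_div_cancel_left c (by omega)]
      exact (Nat.dvd_div_iff_mul_dvd hd).mpr hsn
    · intro t ht
      rw [Nat.mem_divisors] at ht
      obtain ⟨htn, _⟩ := ht
      rw [Finset.mem_filter, Nat.mem_divisors]
      obtain ⟨c, hc⟩ := htn
      refine ⟨⟨⟨c, ?_⟩, by omega⟩, Dvd.intro t rfl⟩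
      rw [mul_assoc, ← hc, Nat.mul_div_cancel' hd]
    · intro s hs
      rw [Finset.mem_filter] at hs
      show d * (s / d) = s
      exact Nat.mul_div_cancel' hs.2
    · intro t _
      show d * t / d = t
      exact Nat.mul_div_cancel_left t (by omega)
    · intro s hs
      rw [Finset.mem_filter] at hs
      obtain ⟨c, rfl⟩ := hs.2
      show ((ArithmeticFunction.moebius (n / (d * c)) : ℤ) : ℂ)
        = ((ArithmeticFunction.moebius ((n / d) / (d * c / d)) : ℤ) : ℂ)
      rw [Nat.mul_div_cancel_left c (by omega), Nat.div_div_eq_div_mul]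
  rw [step2]
  rw [Nat.sum_div_divisors (n / d) (fun u => ((ArithmeticFunction.moebius u : ℤ) : ℂ)),
    aux_sum_moebius (n / d) hnd0]
  congr 1
  simp only [eq_iff_iff]
  constructor
  · intro h
    have h5 := Nat.mul_div_cancel' hd
    rw [h, mul_one] at h5
    exact h5
  · rintro rfl
    exact Nat.div_self hn

/-- Sum of `θ(α)^e` over the `m`-th roots of unity in `Lˣ`. -/
lemma aux_sum_roots (L : Type) [Field L] [Fintype L] [DecidableEq L] (θ : Lˣ →* ℂˣ)
    (hθ : Function.Injective θ) (e : ℤ) (m : ℕ) (hm : 0 < m)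
    (hdvd : m ∣ Fintype.card Lˣ) :
    ∑ α : Lˣ, (if α ^ m = 1 then (θ α : ℂ) ^ e else 0)
      = (m : ℂ) * (if (m : ℤ) ∣ e then 1 else 0) := by
  classical
  obtain ⟨g, hg⟩ := IsCyclic.exists_ofOrder_eq_natCard (α := Lˣ)
  rw [Nat.card_eq_fintype_card] at hg
  set N := Fintype.card Lˣ with hN
  have hN0 : 0 < N := Fintype.card_pos
  set a := g ^ (N / m) with ha
  have horder : orderOf a = m := by
    rw [ha, orderOf_pow, hg, Nat.gcd_eq_right (Nat.div_dvd_of_dvd hdvd),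
      Nat.div_div_self hdvd (by omega)]
  have ham : a ^ m = 1 := by rw [← horder]; exact pow_orderOf_eq_one a
  have hcard : (Finset.univ.filter (fun α : Lˣ => α ^ m = 1)).card = m := by
    apply le_antisymm
    · calc (Finset.univ.filter (fun α : Lˣ => α ^ m = 1)).card
          ≤ Multiset.card (Polynomial.nthRoots m ((Units.coeHom L) 1)) :=
            card_nthRoots_subgroup_units (Units.coeHom L) (fun _ _ h => Units.ext h) hm 1
        _ ≤ m := by rw [map_one]; exact Polynomial.card_nthRoots m 1
    · have hsub : ((Subgroup.zpowers a : Subgroup Lˣ) : Set Lˣ).toFinset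
          ⊆ Finset.univ.filter (fun α : Lˣ => α ^ m = 1) := by
        intro x hx
        rw [Set.mem_toFinset, SetLike.mem_coe, Subgroup.mem_zpowers_iff] at hx
        obtain ⟨i, rfl⟩ := hx
        simp only [Finset.mem_filter, Finset.mem_univ, true_and]
        rw [← zpow_natCast, ← zpow_mul, mul_comm, zpow_mul, zpow_natCast, ham, one_zpow]
      calc m = Fintype.card (Subgroup.zpowers a) := by
            rw [Fintype.card_zpowers, horder]
        _ = ((Subgroup.zpowers a : Subgroup Lˣ) : Set Lˣ).toFinset.card := by
            rw [Set.toFinset_card]; rfl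
        _ ≤ _ := Finset.card_le_card hsub
  rw [← Finset.sum_filter]
  by_cases he : (m : ℤ) ∣ e
  · obtain ⟨c, rfl⟩ := he
    rw [if_pos ⟨c, rfl⟩]
    have hone : ∀ α ∈ Finset.univ.filter (fun α : Lˣ => α ^ m = 1),
        (θ α : ℂ) ^ ((m : ℤ) * c) = 1 := by
      intro α hα
      rw [Finset.mem_filter] at hα
      have h1 : (θ α : ℂ) ^ (m : ℤ) = 1 := by
        rw [zpow_natCast, ← Units.val_pow_eq_pow_val, ← map_pow, hα.2, map_one, Units.val_one]
      rw [zpow_mul, h1, one_zpow]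
    rw [Finset.sum_congr rfl hone, Finset.sum_const, hcard, nsmul_eq_mul, mul_one]
  · rw [if_neg he, mul_zero]
    set H : Subgroup Lˣ := (powMonoidHom m : Lˣ →* Lˣ).ker with hH
    have hmem : ∀ α : Lˣ, α ∈ H ↔ α ^ m = 1 := fun α => by
      rw [hH, MonoidHom.mem_ker, powMonoidHom_apply]
    have haH : a ∈ H := (hmem a).mpr ham
    set χ : H →* ℂˣ := (zpowGroupHom e).comp (θ.comp H.subtype) with hχ
    have hval : ∀ x : H, (χ x : ℂ) = (θ (x : Lˣ) : ℂ) ^ e := by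
      intro x
      rw [hχ]
      simp [zpowGroupHom, Units.val_zpow_eq_zpow_val]
    have hsum : ∑ α ∈ Finset.univ.filter (fun α : Lˣ => α ^ m = 1), (θ α : ℂ) ^ e
        = ∑ x : H, (χ x : ℂ) := by
      rw [Finset.sum_subtype (p := (· ∈ H)) (Finset.univ.filter (fun α : Lˣ => α ^ m = 1))
        (fun x => by simpa using (hmem x).symm) (fun α => (θ α : ℂ) ^ e)]
      exact Finset.sum_congr rfl fun x _ => (hval x).symm
    rw [hsum]
    apply aux_sum_char_eq_zero χ (a := ⟨a, haH⟩)
    rw [hval ⟨a, haH⟩]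
    intro hcontra
    have h2 : (θ a) ^ e = 1 :=
      Units.ext (by rw [Units.val_zpow_eq_zpow_val, hcontra, Units.val_one])
    have h3 : (orderOf (θ a) : ℤ) ∣ e := orderOf_dvd_iff_zpow_eq_one.mpr h2
    rw [orderOf_injective θ hθ a, horder] at h3
    exact he h3

/-- The degree of `K(α)` over `K` divides `s` iff `α ^ (q^s - 1) = 1`. -/
lemma aux_finrank_dvd_iff (K L : Type) [Field K] [Fintype K] [Field L] [Fintype L]
    [Algebra K L] (α : Lˣ) (s : ℕ) :
    Module.finrank K (IntermediateField.adjoin K {(α : L)}) ∣ s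
      ↔ α ^ (Fintype.card K ^ s - 1) = 1 := by
  classical
  set q := Fintype.card K with hq
  have hq2 : 2 ≤ q := Fintype.one_lt_card
  haveI hfd : FiniteDimensional K L := Module.Finite.of_finite
  set E := IntermediateField.adjoin K {(α : L)} with hE
  letI : Fintype E := Fintype.ofFinite E
  set d := Module.finrank K E with hd
  have hcardE : Fintype.card E = q ^ d := Module.card_eq_pow_finrank
  have hαE : (α : L) ∈ E := IntermediateField.mem_adjoin_simple_self K (α : L)
  have hs1 : (1:ℕ) ≤ q ^ s := Nat.one_le_pow _ _ (by omega)
  have hd1 : (1:ℕ) ≤ q ^ d := Nat.one_le_pow _ _ (by omega)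
  constructor
  · intro h
    have hne : (⟨(α : L), hαE⟩ : E) ≠ 0 := by
      intro hc
      exact α.ne_zero (by simpa using congrArg Subtype.val hc)
    have h1 : (⟨(α : L), hαE⟩ : E) ^ (q ^ d - 1) = 1 := by
      have := FiniteField.pow_card_sub_one_eq_one (⟨(α : L), hαE⟩ : E) hne
      rwa [hcardE] at this
    have h2 : (α : L) ^ (q ^ d - 1) = 1 := by
      have h3 := congrArg Subtype.val h1
      rw [SubmonoidClass.coe_pow] at h3
      simpa using h3
    obtain ⟨t, rfl⟩ := h
    obtain ⟨c, hc⟩ : q ^ d - 1 ∣ q ^ (d * t) - 1 :=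
      Nat.pow_sub_one_dvd_pow_sub_one q (dvd_mul_right d t)
    apply Units.ext
    rw [Units.val_pow_eq_pow_val, Units.val_one, hc, pow_mul, h2, one_pow]
  · intro h
    have h2 : (α : L) ^ (q ^ s - 1) = 1 := by
      have h3 := congrArg Units.val h
      rwa [Units.val_pow_eq_pow_val, Units.val_one] at h3
    have hfrob : (α : L) ^ (q ^ s) = (α : L) := by
      rw [show q ^ s = (q ^ s - 1) + 1 by omega, pow_succ, h2, one_mul]
    set p := ringChar K with hp
    obtain ⟨k, hpprime, hqpk⟩ := FiniteField.card K p
    haveI : Fact p.Prime := ⟨hpprime⟩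
    haveI : CharP L p := charP_of_injective_algebraMap (algebraMap K L).injective p
    have hqs : q ^ s = p ^ ((k : ℕ) * s) := by rw [hq, hqpk, ← pow_mul]
    have hall : ∀ x ∈ E, x ^ (q ^ s) = x := by
      intro x hx
      rw [hE] at hx
      induction hx using IntermediateField.adjoin_induction with
      | mem y hy =>
        rw [Set.mem_singleton_iff] at hy
        subst hy; exact hfrob
      | algebraMap c =>
        rw [← map_pow]
        congr 1
        exact FiniteField.pow_card_pow s c
      | add x y hx hy ihx ihy =>
        rw [hqs] at ihx ihy ⊢
        rw [add_pow_char_pow, ihx, ihy]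
      | inv x hx ihx =>
        rw [inv_pow, ihx]
      | mul x y hx hy ihx ihy =>
        rw [mul_pow, ihx, ihy]
    have hEunits : ∀ u : Eˣ, u ^ (q ^ s - 1) = 1 := by
      intro u
      have hu0 : (u : E) ≠ 0 := u.ne_zero
      have h4 : ((u : E) : L) ^ (q ^ s) = ((u : E) : L) := hall _ (u : E).2
      have h5 : (u : E) ^ (q ^ s) = (u : E) := by
        have h4' : (((u : E) ^ (q ^ s) : E) : L) = ((u : E) : L) := by
          rw [SubmonoidClass.coe_pow]; exact h4
        exact Subtype.coe_injective h4'
      have h6 : (u : E) ^ (q ^ s - 1) * (u : E) = 1 * (u : E) := by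
        rw [← pow_succ, show q ^ s - 1 + 1 = q ^ s by omega, h5, one_mul]
      have h7 : (u : E) ^ (q ^ s - 1) = 1 := mul_right_cancel₀ hu0 h6
      apply Units.ext
      rw [Units.val_pow_eq_pow_val, Units.val_one, h7]
    have h8 : q ^ d - 1 ∣ q ^ s - 1 := by
      have h9 := (FiniteField.forall_pow_eq_one_iff (K := E) (q ^ s - 1)).mp hEunits
      rwa [hcardE] at h9
    exact aux_dvd_of_pow_sub_one_dvd hq2 h8

/-- Lemma 4.6 of the paper (element-level form): for a finite field `K` with `q` elements, a
degree-`n` extension `L/K`, an injective character `θ : Lˣ → ℂˣ` and an integer `e`, the sum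
of `θ(α)^e` over all `α ∈ Lˣ` generating `L` over `K` equals
`Σ_{s ∣ n} μ̂(n/s)(q^s - 1)·δ[(q^s - 1) ∣ e]`. -/
theorem character_sum_over_generators
    (n : ℕ) (hn : 1 ≤ n) (K L : Type) [Field K] [Fintype K] [Field L] [Fintype L] [DecidableEq L]
    [Algebra K L] (hdim : Module.finrank K L = n)
    (θ : Lˣ →* ℂˣ) (hθ : Function.Injective θ) (e : ℤ) :
    (∑ α : Lˣ,
        if Module.finrank K (IntermediateField.adjoin K {(α : L)}) = n
        then ((θ α : ℂ) ^ e) else 0)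
      = ∑ s ∈ n.divisors,
          ((ArithmeticFunction.moebius (n / s)) : ℂ) * ((Fintype.card K : ℂ) ^ s - 1) *
            (if ((Fintype.card K ^ s - 1 : ℕ) : ℤ) ∣ e then 1 else 0) := by
  classical
  set q := Fintype.card K with hq
  have hq2 : 2 ≤ q := Fintype.one_lt_card
  haveI hfd : FiniteDimensional K L := Module.Finite.of_finite
  have hcardL : Fintype.card L = q ^ n := by
    rw [hq, Module.card_eq_pow_finrank (K := K) (V := L), hdim]
  have hcardLx : Fintype.card Lˣ = q ^ n - 1 := by rw [Fintype.card_units, hcardL]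
  have hkey : ∀ (α : Lˣ) (s : ℕ),
      Module.finrank K (IntermediateField.adjoin K {(α : L)}) ∣ s ↔ α ^ (q ^ s - 1) = 1 :=
    fun α s => aux_finrank_dvd_iff K L α s
  have hdvdn : ∀ α : Lˣ, Module.finrank K (IntermediateField.adjoin K {(α : L)}) ∣ n := by
    intro α
    rw [hkey α n, ← hcardLx]
    exact pow_card_eq_one
  have hindic : ∀ α : Lˣ,
      (if Module.finrank K (IntermediateField.adjoin K {(α : L)}) = n
        then ((θ α : ℂ) ^ e) else 0)
      = ∑ s ∈ n.divisors, ((ArithmeticFunction.moebius (n / s) : ℤ) : ℂ) *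
          (if α ^ (q ^ s - 1) = 1 then (θ α : ℂ) ^ e else 0) := by
    intro α
    have h1 := aux_moebius_indicator n
      (Module.finrank K (IntermediateField.adjoin K {(α : L)})) (by omega) (hdvdn α)
    calc (if Module.finrank K (IntermediateField.adjoin K {(α : L)}) = n
          then ((θ α : ℂ) ^ e) else 0)
        = (if Module.finrank K (IntermediateField.adjoin K {(α : L)}) = n then 1 else 0)
            * (θ α : ℂ) ^ e := by split <;> simp
      _ = (∑ s ∈ n.divisors, ((ArithmeticFunction.moebius (n / s) : ℤ) : ℂ) *
            (if Module.finrank K (IntermediateField.adjoin K {(α : L)}) ∣ s then 1 else 0))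
            * (θ α : ℂ) ^ e := by rw [h1]
      _ = ∑ s ∈ n.divisors, ((ArithmeticFunction.moebius (n / s) : ℤ) : ℂ) *
            (if α ^ (q ^ s - 1) = 1 then (θ α : ℂ) ^ e else 0) := by
          rw [Finset.sum_mul]
          refine Finset.sum_congr rfl fun s _ => ?_
          rw [mul_assoc]
          congr 1
          simp only [hkey α s]
          split <;> simp
  rw [Finset.sum_congr rfl (fun α _ => hindic α), Finset.sum_comm]
  refine Finset.sum_congr rfl fun s hs => ?_
  rw [Nat.mem_divisors] at hs
  have hs0 : s ≠ 0 := by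
    rintro rfl
    rw [Nat.zero_dvd] at hs
    omega
  have hqs2 : 2 ≤ q ^ s := le_trans hq2 (Nat.le_self_pow hs0 q)
  have hmdvd : q ^ s - 1 ∣ Fintype.card Lˣ := by
    rw [hcardLx]
    obtain ⟨t, rfl⟩ := hs.1
    exact Nat.pow_sub_one_dvd_pow_sub_one q (dvd_mul_right s t)
  rw [← Finset.mul_sum,
    aux_sum_roots L θ hθ e (q ^ s - 1) (by omega) hmdvd]
  have hcast : ((q ^ s - 1 : ℕ) : ℂ) = (q : ℂ) ^ s - 1 := by
    rw [Nat.cast_sub (by omega), Nat.cast_pow, Nat.cast_one]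
  rw [hcast]
  ring
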